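/- Let 0 ≤ α < 1 and 0 < τ < 1. Then for every complex s with Re s > 0, the number ω(s) = s²(1 + τs^α)/(1 + s^α) is well defined (the denominator is nonzero) and ω(s) ∈ ℂ \ (−∞, 0], i.e. ω(s) is not a nonpositive real number. -/

import Mathlib

set_option maxHeartbeats 1000000


open Real Complex

private lemma key_trig (α τ θ R : ℝ) (hα0 : 0 ≤ α) (hα1 : α < 1)
    (hτ0 : 0 < τ) (hτ1 : τ < 1) (hθ0 : 0 < θ) (hθ : θ < π / 2) (hR : 0 < R) :
    0 < (Real.cos θ ^ 2 - Real.sin θ ^ 2) * ((τ - 1) * (R * Real.sin (θ * α)))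
        + 2 * (Real.cos θ * Real.sin θ)
          * (1 + τ * R ^ 2 + (1 + τ) * (R * Real.cos (θ * α))) := by
  have hπ := Real.pi_pos
  have hc : 0 < Real.cos θ := Real.cos_pos_of_mem_Ioo ⟨by linarith, hθ⟩
  have hσ : 0 < Real.sin θ := Real.sin_pos_of_pos_of_lt_pi hθ0 (by linarith)
  have hθα0 : 0 ≤ θ * α := mul_nonneg hθ0.le hα0
  have hθα : θ * α < π / 2 := by nlinarith
  have hcα : 0 < Real.cos (θ * α) := Real.cos_pos_of_mem_Ioo ⟨by linarith, hθα⟩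
  have hsin : 0 < Real.sin (2 * θ - θ * α) := by
    apply Real.sin_pos_of_pos_of_lt_pi
    · nlinarith
    · nlinarith
  have hid : Real.sin (2 * θ - θ * α)
      = 2 * Real.sin θ * Real.cos θ * Real.cos (θ * α)
        - (Real.cos θ ^ 2 - Real.sin θ ^ 2) * Real.sin (θ * α) := by
    rw [Real.sin_sub, Real.sin_two_mul, Real.cos_two_mul]
    linear_combination -Real.sin (θ * α) * Real.sin_sq_add_cos_sq θ
  nlinarith [mul_pos (mul_pos (sub_pos.2 hτ1) hR) hsin,
    mul_pos hc hσ,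
    mul_pos (mul_pos hc hσ) (mul_pos hτ0 (mul_pos hR hR)),
    mul_pos (mul_pos (mul_pos hc hσ) hτ0) (mul_pos hR hcα)]

/-- For `0 ≤ α < 1`, `0 < τ < 1` and every `s` with `Re s > 0`,
the denominator `1 + s^α` is nonzero and
`ω(s) = s²(1+τs^α)/(1+s^α)` is not a nonpositive real number
(`s^α` the principal branch). -/
theorem omega_avoids_nonpositive_reals
    (α τ : ℝ) (hα0 : 0 ≤ α) (hα1 : α < 1) (hτ0 : 0 < τ) (hτ1 : τ < 1)
    (s : ℂ) (hs : 0 < s.re) :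
    1 + s ^ (α : ℂ) ≠ 0 ∧
    ¬((s ^ 2 * (1 + (τ : ℂ) * s ^ (α : ℂ)) / (1 + s ^ (α : ℂ))).im = 0 ∧
      (s ^ 2 * (1 + (τ : ℂ) * s ^ (α : ℂ)) / (1 + s ^ (α : ℂ))).re ≤ 0) := by
  have hπ := Real.pi_pos
  have hs0 : s ≠ 0 := by
    intro h; rw [h] at hs; simp at hs
  set θ := Complex.arg s with hθdef
  set ρ := ‖s‖ with hρdef
  have hρ : 0 < ρ := norm_pos_iff.mpr hs0
  have hθ : |θ| < π / 2 := Complex.abs_arg_lt_pi_div_two_iff.2 (Or.inl hs)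
  set R := ρ ^ α with hRdef
  have hR : 0 < R := Real.rpow_pos_of_pos hρ α
  have hx : s.re = ρ * Real.cos θ := by
    rw [Complex.cos_arg hs0]; field_simp; rfl
  have hy : s.im = ρ * Real.sin θ := by
    rw [Complex.sin_arg]; field_simp; rfl
  have hare : (s ^ (α : ℂ)).re = R * Real.cos (θ * α) := Complex.cpow_ofReal_re s α
  have haim : (s ^ (α : ℂ)).im = R * Real.sin (θ * α) := Complex.cpow_ofReal_im s α
  have hθα : |θ * α| < π / 2 := by
    rw [abs_mul, _root_.abs_of_nonneg hα0]
    calc |θ| * α ≤ |θ| * 1 := by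
          exact mul_le_mul_of_nonneg_left hα1.le (abs_nonneg θ)
      _ = |θ| := mul_one _
      _ < π / 2 := hθ
  have hcα : 0 < Real.cos (θ * α) := by
    have := abs_lt.1 hθα
    exact Real.cos_pos_of_mem_Ioo ⟨by linarith [this.1], this.2⟩
  have hapos : 0 < (s ^ (α : ℂ)).re := by
    rw [hare]; positivity
  have hden : 1 + s ^ (α : ℂ) ≠ 0 := by
    intro h
    have := congrArg Complex.re h
    simp only [Complex.add_re, Complex.one_re, Complex.zero_re] at this
    linarith
  refine ⟨hden, ?_⟩
  rintro ⟨him, hre⟩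
  set d : ℂ := 1 + s ^ (α : ℂ) with hddef
  set n : ℂ := s ^ 2 * (1 + (τ : ℂ) * s ^ (α : ℂ)) with hndef
  set M : ℂ := n * (starRingEnd ℂ) d with hMdef
  have hM : M = (n / d) * ((Complex.normSq d : ℝ) : ℂ) := by
    rw [hMdef, ← Complex.mul_conj]
    rw [div_mul_eq_mul_div, mul_div_assoc, mul_div_cancel_left₀ _ hden]
  have hMim : M.im = 0 := by
    rw [hM, Complex.mul_im]
    simp [him]
  have hMre : M.re ≤ 0 := by
    rw [hM, Complex.mul_re]
    simp only [Complex.ofReal_re, Complex.ofReal_im, mul_zero, sub_zero]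
    exact mul_nonpos_of_nonpos_of_nonneg hre (Complex.normSq_nonneg d)
  have hMim' : M.im = ρ ^ 2 *
      ((Real.cos θ ^ 2 - Real.sin θ ^ 2) * ((τ - 1) * (R * Real.sin (θ * α)))
        + 2 * (Real.cos θ * Real.sin θ)
          * (1 + τ * R ^ 2 + (1 + τ) * (R * Real.cos (θ * α)))) := by
    simp only [hMdef, hndef, hddef, pow_two, Complex.mul_im, Complex.mul_re,
      Complex.add_re, Complex.add_im, Complex.one_re, Complex.one_im,
      Complex.conj_re, Complex.conj_im, Complex.ofReal_re, Complex.ofReal_im,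
      hx, hy, hare, haim]
    linear_combination (2 * ρ ^ 2 * Real.cos θ * Real.sin θ * τ * R ^ 2)
        * Real.sin_sq_add_cos_sq (θ * α)
  have hMre' : M.re = ρ ^ 2 *
      ((Real.cos θ ^ 2 - Real.sin θ ^ 2)
          * (1 + τ * R ^ 2 + (1 + τ) * (R * Real.cos (θ * α)))
        - 2 * (Real.cos θ * Real.sin θ) * ((τ - 1) * (R * Real.sin (θ * α)))) := by
    simp only [hMdef, hndef, hddef, pow_two, Complex.mul_im, Complex.mul_re,
      Complex.add_re, Complex.add_im, Complex.one_re, Complex.one_im,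
      Complex.conj_re, Complex.conj_im, Complex.ofReal_re, Complex.ofReal_im,
      hx, hy, hare, haim]
    linear_combination ((Real.cos θ ^ 2 - Real.sin θ ^ 2) * ρ ^ 2 * τ * R ^ 2)
        * Real.sin_sq_add_cos_sq (θ * α)
  rcases lt_trichotomy θ 0 with hlt | heq | hgt
  · -- θ < 0 : Im M < 0
    have h2 := key_trig α τ (-θ) R hα0 hα1 hτ0 hτ1 (by linarith)
      (by rcases abs_lt.1 hθ with ⟨h1, _⟩; linarith) hR
    rw [neg_mul, Real.cos_neg, Real.sin_neg, Real.sin_neg, Real.cos_neg] at h2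
    rw [hMim'] at hMim
    have hρ2 : 0 < ρ ^ 2 := by positivity
    have hE := (mul_eq_zero.1 hMim).resolve_left (by positivity)
    linarith
  · -- θ = 0 : Re M > 0
    rw [hMre'] at hMre
    rw [heq] at hMre
    simp only [Real.cos_zero, Real.sin_zero, zero_mul, Real.cos_zero] at hMre
    nlinarith [mul_pos hρ hρ, mul_pos hτ0 (mul_pos hR hR), mul_pos (mul_pos hρ hρ) hR,
      mul_pos (mul_pos (mul_pos hρ hρ) hτ0) (mul_pos hR hR),
      mul_pos (mul_pos hρ hρ) (mul_pos hτ0 hR)]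
  · -- θ > 0 : Im M > 0
    have h2 := key_trig α τ θ R hα0 hα1 hτ0 hτ1 hgt
      (abs_lt.1 hθ).2 hR
    rw [hMim'] at hMim
    have hρ2 : 0 < ρ ^ 2 := by positivity
    have hE := (mul_eq_zero.1 hMim).resolve_left (by positivity)
    linarith
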